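/- Let k ≥ 2, C > 0, and let f be holomorphic on a neighborhood of the closed disk \overline{Δ(z*, r)} where 0 < 2r < 1 and 4r(1+C)/(1−2r) ≤ 1. Suppose |f^{(k)}(z)| ≤ C(1 + |f(z)|) for all z in \overline{Δ(z*,r)}, and suppose there exist points w_0, w_1, …, w_{k−1} ∈ Δ(z*, r) with |f(w_0)| ≤ 1 and |f^{(j)}(w_j)| ≤ 1 + |f(w_j)| for j = 1, …, k−1. Then M(r, f) ≤ 2C + 2/(1 − 2r), where M(r, f) = max over |z − z*| ≤ r of |f(z)|. -/

import Mathlib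

/-- Let k ≥ 2, C > 0, f holomorphic on a neighborhood of the closed disk
Δ(z*,r) with 0 < 2r < 1 and 4r(1+C)/(1−2r) ≤ 1, |f^(k)| ≤ C(1+|f|) on the
closed disk, |f(w₀)| ≤ 1 for some w₀ ∈ Δ(z*,r), and for j = 1,…,k−1 there is
w_j ∈ Δ(z*,r) with |f^(j)(w_j)| ≤ 1 + |f(w_j)|. Then M(r,f) ≤ 2C + 2/(1−2r). -/
theorem stmt_11 (z₀ : ℂ) (r : ℝ) (hr : 0 < r) (hr2 : 2 * r < 1)
    (C : ℝ) (hC : 0 < C) (hr3 : 4 * r * (1 + C) / (1 - 2 * r) ≤ 1)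
    (U : Set ℂ) (hU : IsOpen U) (hUD : Metric.closedBall z₀ r ⊆ U)
    (k : ℕ) (hk : 2 ≤ k)
    (f : ℂ → ℂ) (hf : DifferentiableOn ℂ f U)
    (hfk : ∀ z ∈ Metric.closedBall z₀ r,
      ‖iteratedDeriv k f z‖ ≤ C * (1 + ‖f z‖))
    (hw0 : ∃ w ∈ Metric.ball z₀ r, ‖f w‖ ≤ 1)
    (hwj : ∀ j : ℕ, 1 ≤ j → j ≤ k - 1 → ∃ w ∈ Metric.ball z₀ r,
      ‖iteratedDeriv j f w‖ ≤ 1 + ‖f w‖) :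
    ∀ z ∈ Metric.closedBall z₀ r,
      ‖f z‖ ≤ 2 * C + 2 / (1 - 2 * r) := by
  set K := Metric.closedBall z₀ r with hK
  have h2r : (0:ℝ) < 1 - 2 * r := by linarith
  -- analyticity of all iterated derivatives
  have hfa : AnalyticOnNhd ℂ f U := hf.analyticOnNhd hU
  have hda : ∀ j : ℕ, AnalyticOnNhd ℂ (iteratedDeriv j f) U := by
    intro j
    induction j with
    | zero => simpa [iteratedDeriv_zero] using hfa
    | succ n ih => rw [iteratedDeriv_succ]; exact ih.deriv
  have hdiff : ∀ j : ℕ, ∀ z ∈ K, DifferentiableAt ℂ (iteratedDeriv j f) z :=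
    fun j z hz => ((hda j) z (hUD hz)).differentiableAt
  -- maxima on the compact closed ball
  have hKc : IsCompact K := isCompact_closedBall z₀ r
  have hKne : K.Nonempty := ⟨z₀, Metric.mem_closedBall_self hr.le⟩
  have hmax : ∀ j : ℕ, ∃ M : ℝ, 0 ≤ M ∧ (∀ z ∈ K, ‖iteratedDeriv j f z‖ ≤ M) ∧
      ∃ z ∈ K, ‖iteratedDeriv j f z‖ = M := by
    intro j
    have hcont : ContinuousOn (fun z => ‖iteratedDeriv j f z‖) K :=
      (continuous_norm.comp_continuousOn
        (fun z hz => (hdiff j z hz).continuousAt.continuousWithinAt))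
    obtain ⟨x, hx, hxm⟩ := hKc.exists_isMaxOn hKne hcont
    exact ⟨‖iteratedDeriv j f x‖, by positivity, hxm, x, hx, rfl⟩
  choose M hM0 hMle hMeq using hmax
  -- key step: bound M j by value at one point plus 2r * M (j+1)
  have step : ∀ j : ℕ, ∀ A : ℝ, (∃ w ∈ Metric.ball z₀ r,
      ‖iteratedDeriv j f w‖ ≤ A) → M j ≤ A + 2 * r * M (j + 1) := by
    intro j A ⟨w, hw, hwA⟩
    have hwK : w ∈ K := Metric.ball_subset_closedBall hw
    obtain ⟨z, hz, hze⟩ := hMeq j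
    have hmvt : ‖iteratedDeriv j f z - iteratedDeriv j f w‖ ≤ M (j+1) * ‖z - w‖ := by
      refine Convex.norm_image_sub_le_of_norm_deriv_le (fun x hx => hdiff j x hx)
        (fun x hx => ?_) (convex_closedBall z₀ r) hwK hz
      rw [← iteratedDeriv_succ]
      exact hMle (j+1) x hx
    have hdist : ‖z - w‖ ≤ 2 * r := by
      have h1 : dist z w ≤ dist z z₀ + dist z₀ w := dist_triangle z z₀ w
      have h2 : dist z z₀ ≤ r := Metric.mem_closedBall.mp hz
      have h3 : dist z₀ w ≤ r := by
        rw [dist_comm]; exact (Metric.mem_closedBall.mp hwK)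
      calc ‖z - w‖ = dist z w := (dist_eq_norm z w).symm
        _ ≤ 2 * r := by linarith
    have htri := norm_sub_norm_le (iteratedDeriv j f z) (iteratedDeriv j f w)
    have h4 := mul_le_mul_of_nonneg_left hdist (hM0 (j+1))
    nlinarith [hmvt, hwA, hze]
  -- the three estimates
  have h0 : M 0 ≤ 1 + 2 * r * M 1 := by
    refine step 0 1 ?_
    obtain ⟨w, hw, hwA⟩ := hw0
    exact ⟨w, hw, by simpa [iteratedDeriv_zero] using hwA⟩
  have hMj : ∀ j : ℕ, 1 ≤ j → j ≤ k - 1 → M j ≤ (1 + M 0) + 2 * r * M (j+1) := by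
    intro j h1 h2
    refine step j (1 + M 0) ?_
    obtain ⟨w, hw, hwA⟩ := hwj j h1 h2
    refine ⟨w, hw, hwA.trans ?_⟩
    have : ‖f w‖ ≤ M 0 := by
      have := hMle 0 w (Metric.ball_subset_closedBall hw)
      simpa [iteratedDeriv_zero] using this
    linarith
  have hMk : M k ≤ C * (1 + M 0) := by
    obtain ⟨z, hz, hze⟩ := hMeq k
    rw [← hze]
    refine (hfk z hz).trans ?_
    have : ‖f z‖ ≤ M 0 := by
      have := hMle 0 z hz
      simpa [iteratedDeriv_zero] using this
    nlinarith
  -- downward induction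
  set u : ℝ := 1 / (1 - 2 * r) with hudef
  have hu0 : 0 < u := by rw [hudef]; positivity
  have hu : (1 - 2 * r) * u = 1 := by
    rw [hudef, mul_one_div, div_self (ne_of_gt h2r)]
  set B : ℝ := (1 + M 0) * (u + C) with hB
  have hM0nn : (0:ℝ) ≤ 1 + M 0 := by linarith [hM0 0]
  have ind : ∀ d : ℕ, ∀ j : ℕ, j + d = k → 1 ≤ j → M j ≤ B := by
    intro d
    induction d with
    | zero =>
      intro j hj _
      simp only [Nat.add_zero] at hj
      subst hj
      refine hMk.trans ?_
      rw [hB]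
      nlinarith [mul_nonneg hM0nn hu0.le]
    | succ n ih =>
      intro j hj h1
      have hjk : j ≤ k - 1 := by omega
      have hstep := hMj j h1 hjk
      have hih : M (j+1) ≤ B := ih (j+1) (by omega) (by omega)
      have hBe : B * (1 - 2 * r) = (1 + M 0) * (1 + (1 - 2 * r) * C) := by
        rw [hB]; linear_combination (1 + M 0) * hu
      have hkey : 1 + M 0 ≤ B * (1 - 2 * r) := by
        rw [hBe]
        nlinarith [mul_nonneg hM0nn (mul_nonneg h2r.le hC.le)]
      have hBe' : B * (1 - 2 * r) = B - 2 * r * B := by ring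
      have h2rM : 2 * r * M (j+1) ≤ 2 * r * B :=
        mul_le_mul_of_nonneg_left hih (by linarith)
      linarith
  have hM1 : M 1 ≤ B := ind (k - 1) 1 (by omega) le_rfl
  -- final arithmetic
  have hfinal : M 0 ≤ 2 * C + 2 / (1 - 2 * r) := by
    rw [div_le_one h2r] at hr3
    have ht0 : 0 ≤ 2 * r * (u + C) := by positivity
    have htmul : 2 * r * (u + C) * (1 - 2 * r) = 2 * r + 2 * r * C * (1 - 2 * r) := by
      linear_combination (2 * r) * hu
    have htle : 2 * r * (u + C) ≤ 1 / 2 := by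
      have h' : 2 * r * (u + C) * (1 - 2 * r) ≤ (1 - 2 * r) / 2 := by
        rw [htmul]
        nlinarith [mul_nonneg (mul_nonneg hr.le hC.le) hr.le]
      nlinarith [h', h2r, ht0]
    have hMB : M 0 ≤ 1 + 2 * r * B := by
      have h2rM : 2 * r * M 1 ≤ 2 * r * B :=
        mul_le_mul_of_nonneg_left hM1 (by linarith)
      linarith
    have e1 : 2 * r * B = (1 + M 0) * (2 * r * (u + C)) := by rw [hB]; ring
    have h2 : M 0 ≤ 1 + (1 + M 0) * (2 * r * (u + C)) := by linarith
    have h4 : M 0 ≤ 2 + 2 * (2 * r * (u + C)) := by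
      nlinarith [h2, htle, ht0, hM0 0]
    have h5 : 2 + 4 * r * u = 2 * u := by linear_combination (-2 : ℝ) * hu
    have e2 : 2 * (2 * r * (u + C)) = 4 * r * u + 4 * r * C := by ring
    have h6 : 4 * r * C ≤ 2 * C := by nlinarith
    have hgoal : 2 / (1 - 2 * r) = 2 * u := by rw [hudef]; ring
    linarith
  intro z hz
  have := hMle 0 z hz
  simp only [iteratedDeriv_zero] at this
  linarith
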